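/- Let M ≥ 2 be an even integer and let s_0, …, s_{M−1} ∈ ℝ^M be the rows of the modified DST matrix S. Then the Gram matrix SSᵀ satisfies: ⟨s_k, s_k⟩ = 1 for all k; ⟨s_0, s_{2ℓ+1}⟩ = √2/(M · sin((π/(2M))(2ℓ+1))) for every ℓ ∈ {0, …, M/2−1}; and ⟨s_{k}, s_{m}⟩ = 0 for all other pairs k ≠ m (i.e., whenever k, m ≥ 1 with k ≠ m, and whenever k = 0 and m ≥ 2 is even). -/

import Mathlib

/-- Telescoping sum for cosines at half-integer points. -/
lemma cos_sum_tel (α : ℝ) (M : ℕ) :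
    2 * Real.sin (α / 2) * ∑ n ∈ Finset.range M, Real.cos (α * (n + 1 / 2)) =
      Real.sin (α * M) := by
  rw [Finset.mul_sum]
  have h : ∀ n : ℕ, 2 * Real.sin (α / 2) * Real.cos (α * (n + 1 / 2)) =
      Real.sin (α * (n + 1)) - Real.sin (α * n) := by
    intro n
    rw [Real.sin_sub_sin]
    have e1 : (α * (n + 1) - α * n) / 2 = α / 2 := by ring
    have e2 : (α * (n + 1) + α * n) / 2 = α * (n + 1 / 2) := by ring
    rw [e1, e2]
  simp only [h]
  have := Finset.sum_range_sub (fun n : ℕ => Real.sin (α * n)) M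
  push_cast at this
  simpa using this

/-- Telescoping sum for sines at half-integer points. -/
lemma sin_sum_tel (α : ℝ) (M : ℕ) :
    2 * Real.sin (α / 2) * ∑ n ∈ Finset.range M, Real.sin (α * (n + 1 / 2)) =
      1 - Real.cos (α * M) := by
  rw [Finset.mul_sum]
  have h : ∀ n : ℕ, 2 * Real.sin (α / 2) * Real.sin (α * (n + 1 / 2)) =
      Real.cos (α * n) - Real.cos (α * (n + 1)) := by
    intro n
    rw [Real.cos_sub_cos]
    have e1 : (α * n + α * (n + 1)) / 2 = α * (n + 1 / 2) := by ring
    have e2 : (α * n - α * (n + 1)) / 2 = -(α / 2) := by ring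
    rw [e1, e2, Real.sin_neg]
    ring
  simp only [h]
  have := Finset.sum_range_sub' (fun n : ℕ => Real.cos (α * n)) M
  push_cast at this
  simpa using this

lemma sin_half_ne (M : ℕ) (hM : 0 < M) (j : ℤ) (hj : j ≠ 0) (hj2 : |j| < 2 * M) :
    Real.sin (Real.pi / M * j / 2) ≠ 0 := by
  intro h
  rw [Real.sin_eq_zero_iff] at h
  obtain ⟨n, hn⟩ := h
  have hM' : (M : ℝ) ≠ 0 := by positivity
  have hπ : Real.pi ≠ 0 := Real.pi_ne_zero
  have hr : (j : ℝ) = 2 * M * n := by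
    field_simp at hn
    have h' : Real.pi * (j : ℝ) = Real.pi * (2 * M * n) := by linear_combination (-Real.pi) * hn
    have := mul_left_cancel₀ hπ h'
    linarith
  have hz : j = 2 * (M : ℤ) * n := by exact_mod_cast hr
  rcases eq_or_ne n 0 with rfl | hn0
  · simp at hz; omega
  · have hn1 : 1 ≤ |n| := Int.one_le_abs (by omega)
    have hle : 2 * (M : ℤ) ≤ 2 * M * |n| := le_mul_of_one_le_right (by positivity) hn1
    rw [hz, abs_mul, abs_of_nonneg (by positivity : (0:ℤ) ≤ 2 * (M:ℤ))] at hj2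
    omega

lemma cos_sum_zero (M : ℕ) (hM : 0 < M) (j : ℤ) (hj : j ≠ 0) (hj2 : |j| < 2 * M) :
    ∑ n ∈ Finset.range M, Real.cos (Real.pi / M * j * (n + 1 / 2)) = 0 := by
  have h := cos_sum_tel (Real.pi / M * j) M
  have hM' : (M : ℝ) ≠ 0 := by positivity
  have harg : Real.pi / M * j * M = j * Real.pi := by field_simp
  rw [harg, Real.sin_int_mul_pi] at h
  have hs := sin_half_ne M hM j hj hj2
  have h2 : (2 : ℝ) * Real.sin (Real.pi / M * j / 2) ≠ 0 :=
    mul_ne_zero two_ne_zero hs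
  exact (mul_eq_zero.mp h).resolve_left h2

lemma sin_sum_eq (M : ℕ) (hM : 0 < M) (m : ℕ) (hm : m ≠ 0) (hm2 : m < 2 * M) :
    ∑ n ∈ Finset.range M, Real.sin (Real.pi / M * m * (n + 1 / 2)) =
      (1 - (-1 : ℝ) ^ m) / (2 * Real.sin (Real.pi / M * m / 2)) := by
  have h := sin_sum_tel (Real.pi / M * m) M
  have hM' : (M : ℝ) ≠ 0 := by positivity
  have harg : Real.pi / M * m * M = (m : ℤ) * Real.pi := by push_cast; field_simp
  have hcos : Real.cos (Real.pi / M * m * M) = (-1 : ℝ) ^ m := by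
    rw [harg]
    have := Real.cos_int_mul_pi_sub 0 (m : ℤ)
    simpa using this
  rw [hcos] at h
  have hs : Real.sin (Real.pi / M * m / 2) ≠ 0 := by
    have := sin_half_ne M hM (m : ℤ) (by exact_mod_cast hm)
      (by rw [abs_of_nonneg (by positivity)]; exact_mod_cast hm2)
    push_cast at this
    exact this
  rw [eq_div_iff (mul_ne_zero two_ne_zero hs)]
  linear_combination h

/-- The `(k,n)` entry of the modified DST matrix `S ∈ ℝ^{M×M}` (row 0 replaced by the
constant row `√(1/M)`). -/
noncomputable def modDstEntry (M k n : ℕ) : ℝ :=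
  if k = 0 then Real.sqrt (1 / M)
  else Real.sqrt (2 / M) * Real.sin (Real.pi / M * k * (n + 1 / 2))

/-- Lemma 1, part 1: the Gram matrix `S Sᵀ` of the modified DST. -/
theorem modDst_gram (M : ℕ) (hM : 2 ≤ M) (hEven : Even M) :
    (∀ k < M, ∑ n ∈ Finset.range M, modDstEntry M k n * modDstEntry M k n = 1) ∧
    (∀ ℓ < M / 2, ∑ n ∈ Finset.range M, modDstEntry M 0 n * modDstEntry M (2 * ℓ + 1) n =
        Real.sqrt 2 / (M * Real.sin (Real.pi / (2 * M) * (2 * ℓ + 1)))) ∧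
    (∀ k < M, ∀ m < M, k ≠ m → ¬(k = 0 ∧ Odd m) → ¬(m = 0 ∧ Odd k) →
        ∑ n ∈ Finset.range M, modDstEntry M k n * modDstEntry M m n = 0) := by
  have hM0 : 0 < M := by omega
  have entry0 : ∀ n : ℕ, modDstEntry M 0 n = Real.sqrt (1 / M) := fun n => if_pos rfl
  have entryk : ∀ k n : ℕ, k ≠ 0 → modDstEntry M k n =
      Real.sqrt (2 / M) * Real.sin (Real.pi / M * k * (n + 1 / 2)) :=
    fun k n hk => if_neg hk
  have hMR : (M : ℝ) ≠ 0 := by positivity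
  have hMRpos : (0 : ℝ) < M := by positivity
  -- the diagonal
  have diag : ∀ k < M, ∑ n ∈ Finset.range M, modDstEntry M k n * modDstEntry M k n = 1 := by
    intro k hk
    rcases eq_or_ne k 0 with rfl | hk0
    · simp only [entry0]
      rw [Finset.sum_const, Finset.card_range, nsmul_eq_mul,
        Real.mul_self_sqrt (by positivity)]
      field_simp
    · simp only [entryk k _ hk0]
      have hsq : Real.sqrt (2 / M) * Real.sqrt (2 / M) = 2 / M :=
        Real.mul_self_sqrt (by positivity)
      have hterm : ∀ n : ℕ,
          (Real.sqrt (2 / M) * Real.sin (Real.pi / M * k * (n + 1 / 2))) *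
          (Real.sqrt (2 / M) * Real.sin (Real.pi / M * k * (n + 1 / 2))) =
          2 / M * (1 / 2) - 2 / M *
            (Real.cos (Real.pi / M * (2 * k) * (n + 1 / 2)) / 2) := by
        intro n
        have e : 2 * (Real.pi / M * k * (n + 1 / 2)) =
            Real.pi / M * (2 * k) * (n + 1 / 2) := by ring
        have hs := Real.sin_sq_eq_half_sub (Real.pi / M * k * (n + 1 / 2))
        rw [e] at hs
        calc (Real.sqrt (2 / M) * Real.sin (Real.pi / M * k * (n + 1 / 2))) *
              (Real.sqrt (2 / M) * Real.sin (Real.pi / M * k * (n + 1 / 2)))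
            = (Real.sqrt (2 / M) * Real.sqrt (2 / M)) *
              Real.sin (Real.pi / M * k * (n + 1 / 2)) ^ 2 := by ring
          _ = 2 / M * (1 / 2 - Real.cos (Real.pi / M * (2 * k) * (n + 1 / 2)) / 2) := by
              rw [hsq, hs]
          _ = _ := by ring
      simp only [hterm]
      rw [Finset.sum_sub_distrib, Finset.sum_const, Finset.card_range, ← Finset.mul_sum]
      have hz : ∑ n ∈ Finset.range M,
          Real.cos (Real.pi / M * (2 * k) * (n + 1 / 2)) / 2 = 0 := by
        rw [← Finset.sum_div]
        have := cos_sum_zero M hM0 (2 * k : ℤ) (by omega)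
          (by rw [abs_of_nonneg (by positivity)]; push_cast; omega)
        push_cast at this
        rw [this]
        norm_num
      rw [hz, nsmul_eq_mul]
      field_simp
      ring
  -- the sin sum, in convenient form
  have sinsum : ∀ m : ℕ, m ≠ 0 → m < M →
      ∑ n ∈ Finset.range M, modDstEntry M 0 n * modDstEntry M m n =
        Real.sqrt 2 / M * ((1 - (-1 : ℝ) ^ m) / (2 * Real.sin (Real.pi / M * m / 2))) := by
    intro m hm0 hmM
    simp only [entry0, entryk m _ hm0]
    have hc : Real.sqrt (1 / M) * Real.sqrt (2 / M) = Real.sqrt 2 / M := by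
      rw [← Real.sqrt_mul (by positivity)]
      have e : (1 / (M : ℝ)) * (2 / M) = 2 * (1 / M) ^ 2 := by field_simp
      rw [e, Real.sqrt_mul (by norm_num), Real.sqrt_sq (by positivity)]
      ring
    have : ∀ n : ℕ, Real.sqrt (1 / M) *
        (Real.sqrt (2 / M) * Real.sin (Real.pi / M * m * (n + 1 / 2))) =
        Real.sqrt 2 / M * Real.sin (Real.pi / M * m * (n + 1 / 2)) := by
      intro n
      rw [← mul_assoc, hc]
    simp only [this]
    rw [← Finset.mul_sum, sin_sum_eq M hM0 m hm0 (by omega)]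
  -- Part 2
  have part2 : ∀ ℓ < M / 2,
      ∑ n ∈ Finset.range M, modDstEntry M 0 n * modDstEntry M (2 * ℓ + 1) n =
        Real.sqrt 2 / (M * Real.sin (Real.pi / (2 * M) * (2 * ℓ + 1))) := by
    intro ℓ hℓ
    obtain ⟨c, hc⟩ := hEven
    have hmM : 2 * ℓ + 1 < M := by omega
    rw [sinsum (2 * ℓ + 1) (by omega) hmM]
    have hodd : (-1 : ℝ) ^ (2 * ℓ + 1) = -1 := Odd.neg_one_pow ⟨ℓ, by ring⟩
    rw [hodd]
    have harg : Real.pi / M * (2 * ℓ + 1 : ℕ) / 2 = Real.pi / (2 * M) * (2 * ℓ + 1) := by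
      push_cast
      field_simp
    rw [harg]
    have hspos : 0 < Real.sin (Real.pi / (2 * M) * (2 * ℓ + 1)) := by
      apply Real.sin_pos_of_pos_of_lt_pi
      · have : (0 : ℝ) < 2 * ℓ + 1 := by positivity
        positivity
      · have h1 : (2 * ℓ + 1 : ℝ) < M := by exact_mod_cast hmM
        have h2 : Real.pi / (2 * M) * (2 * ℓ + 1) < Real.pi / (2 * M) * M := by
          apply mul_lt_mul_of_pos_left h1
          positivity
        have h3 : Real.pi / (2 * M) * M = Real.pi / 2 := by field_simp
        rw [h3] at h2
        linarith [Real.pi_pos]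
    have hs : Real.sin (Real.pi / (2 * M) * (2 * ℓ + 1)) ≠ 0 := ne_of_gt hspos
    rw [div_mul_div_comm, div_eq_div_iff (by positivity) (by positivity)]
    ring
  refine ⟨diag, part2, ?_⟩
  -- Part 3: off-diagonal zeros
  -- first, the case k = 0, m even and positive
  have zero_even : ∀ m : ℕ, m ≠ 0 → m < M → Even m →
      ∑ n ∈ Finset.range M, modDstEntry M 0 n * modDstEntry M m n = 0 := by
    intro m hm0 hmM hme
    rw [sinsum m hm0 hmM, Even.neg_one_pow hme]
    norm_num
  intro k hk m hm hne h1 h2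
  rcases eq_or_ne k 0 with rfl | hk0
  · have hme : Even m := by
      rcases Nat.even_or_odd m with h | h
      · exact h
      · exact absurd ⟨rfl, h⟩ h1
    exact zero_even m (fun h => hne h.symm) hm hme
  rcases eq_or_ne m 0 with rfl | hm0
  · have hke : Even k := by
      rcases Nat.even_or_odd k with h | h
      · exact h
      · exact absurd ⟨rfl, h⟩ h2
    have := zero_even k hk0 hk hke
    rw [← this]
    exact Finset.sum_congr rfl fun n _ => mul_comm _ _
  -- both k, m ≥ 1, k ≠ m
  · simp only [entryk k _ hk0, entryk m _ hm0]
    have hsq : Real.sqrt (2 / M) * Real.sqrt (2 / M) = 2 / M :=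
      Real.mul_self_sqrt (by positivity)
    have hterm : ∀ n : ℕ,
        (Real.sqrt (2 / M) * Real.sin (Real.pi / M * k * (n + 1 / 2))) *
        (Real.sqrt (2 / M) * Real.sin (Real.pi / M * m * (n + 1 / 2))) =
        2 / M * (Real.cos (Real.pi / M * ((k : ℝ) - m) * (n + 1 / 2)) / 2) -
        2 / M * (Real.cos (Real.pi / M * ((k : ℝ) + m) * (n + 1 / 2)) / 2) := by
      intro n
      have eA : Real.pi / M * ((k : ℝ) - m) * (n + 1 / 2) =
          Real.pi / M * k * (n + 1 / 2) - Real.pi / M * m * (n + 1 / 2) := by ring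
      have eB : Real.pi / M * ((k : ℝ) + m) * (n + 1 / 2) =
          Real.pi / M * k * (n + 1 / 2) + Real.pi / M * m * (n + 1 / 2) := by ring
      rw [eA, eB, Real.cos_sub, Real.cos_add]
      calc (Real.sqrt (2 / M) * Real.sin (Real.pi / M * k * (n + 1 / 2))) *
            (Real.sqrt (2 / M) * Real.sin (Real.pi / M * m * (n + 1 / 2)))
          = (Real.sqrt (2 / M) * Real.sqrt (2 / M)) *
            (Real.sin (Real.pi / M * k * (n + 1 / 2)) *
             Real.sin (Real.pi / M * m * (n + 1 / 2))) := by ring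
        _ = 2 / M * (Real.sin (Real.pi / M * k * (n + 1 / 2)) *
             Real.sin (Real.pi / M * m * (n + 1 / 2))) := by rw [hsq]
        _ = _ := by ring
    simp only [hterm]
    rw [Finset.sum_sub_distrib, ← Finset.mul_sum, ← Finset.mul_sum,
      ← Finset.sum_div, ← Finset.sum_div]
    have hz1 : ∑ n ∈ Finset.range M,
        Real.cos (Real.pi / M * ((k : ℝ) - m) * (n + 1 / 2)) = 0 := by
      have := cos_sum_zero M hM0 ((k : ℤ) - m)
        (by omega) (by rw [abs_lt]; push_cast; constructor <;> [nlinarith; nlinarith])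
      push_cast at this
      exact this
    have hz2 : ∑ n ∈ Finset.range M,
        Real.cos (Real.pi / M * ((k : ℝ) + m) * (n + 1 / 2)) = 0 := by
      have := cos_sum_zero M hM0 ((k : ℤ) + m)
        (by omega) (by rw [abs_of_nonneg (by positivity)]; push_cast; omega)
      push_cast at this
      exact this
    rw [hz1, hz2]
    ring
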